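/- arXiv:1906.00445 — 2 statements merged into one kernel-verified Lean document; each statement's English description precedes it below -/
import Mathlib

section
/- Suppose the ideal 𝔞 is relatively prime to the ideal (1 − ξ) for every root of unity ξ ≠ 1 in μ. Then for every finite subgroup F' = ⟨(r, ξ)⟩ of R ⋊ μ, there exists a finite subgroup F̃ of 𝔞 ⋊ μ which is conjugate in R ⋊ μ to F'. -/
open SemidirectProduct Subgroup

/-- The monoid homomorphism `AddAut A →* MulAut (Multiplicative A)`. -/
def addAutToMulAut (A : Type*) [AddGroup A] : Multiplicative (AddAut A) →* MulAut (Multiplicative A) where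
  toFun e := AddEquiv.toMultiplicative (Multiplicative.toAdd e)
  map_one' := rfl
  map_mul' _ _ := rfl

variable {R : Type*} [CommRing R]

/-- The action of a subgroup `μ ≤ Rˣ` on (the multiplicative version of) the additive group
of `R`, by multiplication. -/
noncomputable def ringAction (μ : Subgroup Rˣ) : ↥μ →* MulAut (Multiplicative R) :=
  (addAutToMulAut R).comp ((DistribMulAction.toAddAut Rˣ R).comp μ.subtype)

/-- The semidirect product `R ⋊ μ` of the additive group of `R` by a subgroup `μ ≤ Rˣ`
acting by multiplication. -/
noncomputable abbrev RingSemidirect (μ : Subgroup Rˣ) :=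
  Multiplicative R ⋊[ringAction μ] ↥μ

/-- Auxiliary: the subgroup of `R ⋊ μ` of elements with left component in `𝔞`. -/
noncomputable def idealSub (μ : Subgroup Rˣ) (𝔞 : Ideal R) : Subgroup (RingSemidirect μ) where
  carrier := {x | Multiplicative.toAdd x.left ∈ 𝔞}
  one_mem' := by
    show Multiplicative.toAdd ((1 : RingSemidirect μ).left) ∈ 𝔞
    simp [Ideal.zero_mem]
  mul_mem' := by
    intro a b ha hb
    show Multiplicative.toAdd ((a * b).left) ∈ 𝔞
    rw [mul_left]
    have : Multiplicative.toAdd (a.left * (ringAction μ) a.right b.left)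
        = Multiplicative.toAdd a.left + (a.right : Rˣ) • Multiplicative.toAdd b.left := rfl
    rw [this, Units.smul_def]
    exact 𝔞.add_mem ha (𝔞.mul_mem_left _ hb)
  inv_mem' := by
    intro a ha
    show Multiplicative.toAdd (a⁻¹.left) ∈ 𝔞
    rw [inv_left]
    have : Multiplicative.toAdd ((ringAction μ) a.right⁻¹ a.left⁻¹)
        = ((a.right)⁻¹ : Rˣ) • (- Multiplicative.toAdd a.left) := rfl
    rw [this, Units.smul_def]
    exact 𝔞.mul_mem_left _ (𝔞.neg_mem ha)

/-- Let `R` be the ring of integers of a number field (here: a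
characteristic-zero domain), `μ = ⟨ζ⟩ ⊆ R^*` a finite cyclic group of roots of unity acting
by multiplication, and suppose the ideal `𝔞` is relatively prime to the ideal `(1 − ξ)` for
every root of unity `ξ ≠ 1` in `μ`.  Then for every finite subgroup `F' = ⟨(r, ξ)⟩` of
`R ⋊ μ`, there exists a finite subgroup `F̃` of `𝔞 ⋊ μ` (realized as the subgroup of
elements of `R ⋊ μ` whose first component lies in `𝔞`) which is conjugate in `R ⋊ μ`
to `F'`. -/
theorem finite_subgroup_conjugate_into_ideal_semidirect
    [IsDomain R] [CharZero R]
    (ζ : Rˣ) (hζ : IsOfFinOrder ζ) (𝔞 : Ideal R) (h𝔞 : 𝔞 ≠ ⊥)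
    (hcop : ∀ ξ : Rˣ, ξ ∈ zpowers ζ → ξ ≠ 1 → 𝔞 ⊔ Ideal.span {1 - (ξ : R)} = ⊤)
    (r : R) (ξ : ↥(zpowers ζ))
    (hfin : IsOfFinOrder (⟨Multiplicative.ofAdd r, ξ⟩ : RingSemidirect (zpowers ζ))) :
    ∃ g : RingSemidirect (zpowers ζ),
      ∀ y ∈ Subgroup.map (MulAut.conj g).toMonoidHom
          (zpowers (⟨Multiplicative.ofAdd r, ξ⟩ : RingSemidirect (zpowers ζ))),
        Multiplicative.toAdd y.left ∈ 𝔞 := by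
  set x : RingSemidirect (zpowers ζ) := ⟨Multiplicative.ofAdd r, ξ⟩ with hx
  -- it suffices to find g with g * x * g⁻¹ ∈ idealSub _ 𝔞
  suffices h : ∃ g : RingSemidirect (zpowers ζ), g * x * g⁻¹ ∈ idealSub (zpowers ζ) 𝔞 by
    obtain ⟨g, hg⟩ := h
    refine ⟨g, ?_⟩
    rintro y ⟨z, hz, rfl⟩
    obtain ⟨k, rfl⟩ := hz
    have : (MulAut.conj g).toMonoidHom (x ^ k) = (g * x * g⁻¹) ^ k := by
      simp [MulAut.conj_apply, conj_zpow]
    rw [this]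
    exact (idealSub (zpowers ζ) 𝔞).zpow_mem hg k
  by_cases hξ : (ξ : Rˣ) = 1
  · -- then r = 0, take g = 1
    have hr0 : r = 0 := by
      have hξ1 : ξ = 1 := Subtype.ext hξ
      have hx1 : x = inl (Multiplicative.ofAdd r) := by
        rw [hx, hξ1]; rfl
      rw [hx1] at hfin
      have hord : orderOf (inl (N := Multiplicative R) (G := ↥(zpowers ζ))
          (φ := ringAction (zpowers ζ)) (Multiplicative.ofAdd r))
          = orderOf (Multiplicative.ofAdd r) := orderOf_injective _ inl_injective _
      have hfin' : IsOfFinOrder (Multiplicative.ofAdd r) := by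
        rw [← orderOf_pos_iff, ← hord, orderOf_pos_iff]; exact hfin
      obtain ⟨n, hn, hpow⟩ := hfin'.exists_pow_eq_one
      have : (n : R) * r = 0 := by
        have := congrArg Multiplicative.toAdd hpow
        simpa [← ofAdd_nsmul, nsmul_eq_mul] using this
      rcases mul_eq_zero.mp this with h | h
      · exact absurd h (Nat.cast_ne_zero.mpr hn.ne')
      · exact h
    refine ⟨1, ?_⟩
    show Multiplicative.toAdd ((1 * x * 1⁻¹).left) ∈ 𝔞
    simp [hx, hr0]
  · -- coprimality case
    have hmem : r ∈ 𝔞 ⊔ Ideal.span {1 - ((ξ : Rˣ) : R)} := by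
      rw [hcop (ξ : Rˣ) ξ.2 hξ]; trivial
    obtain ⟨s, hs, c, hc, hsc⟩ := Submodule.mem_sup.mp hmem
    obtain ⟨t, ht⟩ := Ideal.mem_span_singleton'.mp hc
    set g : RingSemidirect (zpowers ζ) := inl (Multiplicative.ofAdd (-t)) with hg
    refine ⟨g, ?_⟩
    have key : Multiplicative.toAdd ((g * x * g⁻¹).left) = s := by
      have h1 : Multiplicative.toAdd ((g * x * g⁻¹).left)
          = (-t + ((1 : ↥(zpowers ζ)) : Rˣ) • r)
            + (((1 : ↥(zpowers ζ)) * ξ : ↥(zpowers ζ)) : Rˣ) •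
              (((1 : ↥(zpowers ζ))⁻¹ : ↥(zpowers ζ)) : Rˣ) • (- -t) := rfl
      rw [h1, ← hsc, ← ht]
      simp [Units.smul_def]
      ring
    show Multiplicative.toAdd ((g * x * g⁻¹).left) ∈ 𝔞
    rw [key]; exact hs
end

section
/- Suppose 𝔞 is an ideal of R relatively prime to (1 − ξ) for all 1 ≠ ξ ∈ μ. If r, s ∈ 𝔞 and 1 ≠ ξ ∈ μ with (s, ξ) = (b, a)(r, ξ)(b, a)^{−1} for some (b, a) ∈ R ⋊ μ, then necessarily b ∈ 𝔞, i.e. (r, ξ) and (s, ξ) are already conjugate in 𝔞 ⋊ μ. -/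
open SemidirectProduct Subgroup

variable {R : Type*} [CommRing R]

theorem ringAction_apply (μ : Subgroup Rˣ) (g : ↥μ) (x : Multiplicative R) :
    ringAction μ g x = Multiplicative.ofAdd ((g : Rˣ) • Multiplicative.toAdd x) := rfl

/-- Suppose `𝔞` is an ideal of `R` relatively prime to `(1 − ξ)` for all
`1 ≠ ξ ∈ μ`, where `μ ⊆ R^*` is a finite cyclic group of roots of unity.  If `r, s ∈ 𝔞` and
`1 ≠ ξ ∈ μ` with `(s, ξ) = (b, a)(r, ξ)(b, a)⁻¹` for some `(b, a) ∈ R ⋊ μ`, then necessarily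
`b ∈ 𝔞`, i.e. `(r, ξ)` and `(s, ξ)` are already conjugate in `𝔞 ⋊ μ`. -/
theorem conjugator_lies_in_ideal_semidirect
    (μ : Subgroup Rˣ) [Finite μ] [IsCyclic μ] (𝔞 : Ideal R)
    (hcop : ∀ ξ : Rˣ, ξ ∈ μ → ξ ≠ 1 → 𝔞 ⊔ Ideal.span {1 - (ξ : R)} = ⊤)
    (r s : R) (hr : r ∈ 𝔞) (hs : s ∈ 𝔞) (ξ : ↥μ) (hξ : ξ ≠ 1)
    (b : R) (a : ↥μ)
    (hconj : (⟨Multiplicative.ofAdd s, ξ⟩ : RingSemidirect μ) =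
      (⟨Multiplicative.ofAdd b, a⟩ : RingSemidirect μ) * ⟨Multiplicative.ofAdd r, ξ⟩ *
        (⟨Multiplicative.ofAdd b, a⟩ : RingSemidirect μ)⁻¹) :
    b ∈ 𝔞 := by
  have h := congrArg SemidirectProduct.left hconj
  simp only [mul_left, mul_right, inv_left, inv_right] at h
  simp only [ringAction_apply, Subgroup.coe_mul, Subgroup.coe_inv] at h
  replace h := congrArg Multiplicative.toAdd h
  simp only [toAdd_mul, toAdd_inv, toAdd_ofAdd, smul_smul] at h
  have hAux : (a : Rˣ) * ξ * (a : Rˣ)⁻¹ = (ξ : Rˣ) := by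
    rw [mul_comm (a : Rˣ) (ξ : Rˣ), mul_inv_cancel_right]
  rw [hAux] at h
  -- h : s = b + ↑a • r + -(↑ξ • b)
  have key : (1 - ((ξ : Rˣ) : R)) * b ∈ 𝔞 := by
    have : (1 - ((ξ : Rˣ) : R)) * b = s - ((a : Rˣ) : R) * r := by
      rw [h]; simp [Units.smul_def]; ring
    rw [this]
    exact 𝔞.sub_mem hs (𝔞.mul_mem_left _ hr)
  have hξ' : (ξ : Rˣ) ≠ 1 := by
    intro hc
    exact hξ (Subtype.ext hc)
  have htop := hcop (ξ : Rˣ) ξ.2 hξ'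
  obtain ⟨x, hx, y, hy, hxy⟩ := Submodule.mem_sup.mp (htop ▸ Submodule.mem_top :
    (1 : R) ∈ 𝔞 ⊔ Ideal.span {1 - ((ξ : Rˣ) : R)})
  obtain ⟨c, hc⟩ := Ideal.mem_span_singleton'.mp hy
  have : b = x * b + c * ((1 - ((ξ : Rˣ) : R)) * b) := by
    rw [← mul_assoc, hc]
    calc b = (x + y) * b := by rw [hxy, one_mul]
    _ = x * b + y * b := by ring
  rw [this]
  exact 𝔞.add_mem (𝔞.mul_mem_right _ hx) (𝔞.mul_mem_left _ key)
end
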